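/- arXiv:2105.05797 — 2 statements merged into one kernel-verified Lean document; each statement's English description precedes it below -/
import Mathlib

section
/- Let n ≥ 3 be an odd integer, and let S = { (x_1, …, x_n) ∈ ℤ^n : ∑_{i=1}^n (−1)^{x_i} = 1 or ∑_{i=1}^n (−1)^{x_i} = −1 }. Then the induced subgraph of the n-dimensional grid on S is (n+1)-regular and has girth exactly 6. -/
/-- The `n`-dimensional grid: the unit-distance graph on `ℤ^n`. Two points are adjacent
iff they differ by exactly 1 in one coordinate and agree in all others, i.e. iff the sum
of the absolute coordinate differences is 1. -/
def grid (n : ℕ) : SimpleGraph (Fin n → ℤ) where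
  Adj x y := ∑ i, |x i - y i| = 1
  symm := ⟨fun x y h => by
    rwa [Finset.sum_congr rfl fun i _ => abs_sub_comm (y i) (x i)]⟩
  loopless := ⟨fun x h => by simp at h⟩

lemma sum_comp_update {n : ℕ} (g : ℤ → ℤ) (x : Fin n → ℤ) (i : Fin n) (a : ℤ) :
    ∑ j, g (Function.update x i a j) = (∑ j, g (x j)) + (g a - g (x i)) := by
  have h : ∀ j : Fin n, g (Function.update x i a j)
      = g (x j) + (if j = i then g a - g (x i) else 0) := by
    intro j
    rcases eq_or_ne j i with rfl | hj
    · simp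
    · simp [Function.update_apply, hj]
  simp_rw [h]
  rw [Finset.sum_add_distrib, Finset.sum_ite_eq' Finset.univ i (fun _ => g a - g (x i))]
  simp

lemma grid_adj_iff {n : ℕ} {x y : Fin n → ℤ} :
    (grid n).Adj x y ↔ ∃ i : Fin n, ∃ e : ℤ,
      (e = 1 ∨ e = -1) ∧ y = Function.update x i (x i + e) := by
  constructor
  · intro h
    have h' : ∑ i, |x i - y i| = 1 := h
    have hex : ∃ i ∈ Finset.univ, |x i - y i| ≠ 0 := by
      by_contra hc
      push_neg at hc
      rw [Finset.sum_eq_zero (fun j hj => hc j hj)] at h'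
      exact one_ne_zero h'.symm
    obtain ⟨i, _, hi⟩ := hex
    have hsplit : |x i - y i| + ∑ j ∈ Finset.univ.erase i, |x j - y j| = 1 := by
      rw [Finset.add_sum_erase _ (fun j => |x j - y j|) (Finset.mem_univ i)]; exact h'
    have hrest0 : 0 ≤ ∑ j ∈ Finset.univ.erase i, |x j - y j| :=
      Finset.sum_nonneg fun j _ => abs_nonneg _
    have h1 : 1 ≤ |x i - y i| := by
      have := abs_nonneg (x i - y i); omega
    have hxi : |x i - y i| = 1 := by omega
    have hall : ∀ j ∈ Finset.univ.erase i, |x j - y j| = 0 := by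
      rw [← Finset.sum_eq_zero_iff_of_nonneg (fun j _ => abs_nonneg _)]
      omega
    refine ⟨i, y i - x i, ?_, ?_⟩
    · rw [abs_sub_comm] at hxi
      exact (abs_eq (by norm_num)).mp hxi
    · funext j
      rcases eq_or_ne j i with rfl | hj
      · simp
      · rw [Function.update_of_ne hj]
        have := hall j (Finset.mem_erase.mpr ⟨hj, Finset.mem_univ j⟩)
        have := abs_eq_zero.mp this
        omega
  · rintro ⟨i, e, he, rfl⟩
    show ∑ j, |x j - Function.update x i (x i + e) j| = 1
    rw [Finset.sum_eq_single i]
    · rw [Function.update_self]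
      rcases he with rfl | rfl <;> norm_num
    · intro j _ hj
      rw [Function.update_of_ne hj]
      simp
    · intro hmem
      exact absurd (Finset.mem_univ i) hmem

lemma negOnePow_pm (a : ℤ) : ((a.negOnePow : ℤ) = 1 ∨ ((a.negOnePow : ℤ)) = -1) := by
  rcases Int.units_eq_one_or a.negOnePow with h | h <;> simp [h]

lemma negOnePow_add_unit {a e : ℤ} (he : e = 1 ∨ e = -1) :
    (((a + e).negOnePow : ℤ)) = -((a.negOnePow : ℤ)) := by
  rcases he with rfl | rfl
  · rw [Int.negOnePow_succ]; push_cast; ring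
  · have : a = (a + -1) + 1 := by ring
    conv_rhs => rw [this]
    rw [Int.negOnePow_succ]; push_cast; ring

lemma sigma_update {n : ℕ} (x : Fin n → ℤ) (i : Fin n) {e : ℤ} (he : e = 1 ∨ e = -1) :
    ∑ j, (((Function.update x i (x i + e) j).negOnePow : ℤ))
      = (∑ j, ((x j).negOnePow : ℤ)) - 2 * ((x i).negOnePow : ℤ) := by
  rw [sum_comp_update (fun z => ((z.negOnePow : ℤ))) x i (x i + e)]
  rw [negOnePow_add_unit he]; ring

/-- signed sum -/
def sg {n : ℕ} (x : Fin n → ℤ) : ℤ := ∑ i, ((x i).negOnePow : ℤ)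

lemma step_lemma {n : ℕ} {u w : Fin n → ℤ}
    (hu : sg u = 1 ∨ sg u = -1) (hw : sg w = 1 ∨ sg w = -1)
    (h : (grid n).Adj u w) :
    ∃ i : Fin n, ∃ e : ℤ, (e = 1 ∨ e = -1) ∧ w = Function.update u i (u i + e) ∧
      ((u i).negOnePow : ℤ) = sg u ∧ sg w = -(sg u) := by
  obtain ⟨i, e, he, rfl⟩ := grid_adj_iff.mp h
  have hσ : sg (Function.update u i (u i + e)) = sg u - 2 * ((u i).negOnePow : ℤ) :=
    sigma_update u i he
  have ht := negOnePow_pm (u i)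
  refine ⟨i, e, he, rfl, ?_, ?_⟩ <;>
    rcases hu with hu | hu <;> rcases hw with hw | hw <;> rcases ht with ht | ht <;> omega

lemma sum_step {n : ℕ} (u : Fin n → ℤ) (i : Fin n) {e : ℤ} (he : e = 1 ∨ e = -1) :
    ∑ j, Function.update u i (u i + e) j = (∑ j, u j) + e := by
  have := sum_comp_update (fun z => z) u i (u i + e)
  rw [this]; ring

lemma walk_parity {n : ℕ} {S : Set (Fin n → ℤ)} {x y : ↥S}
    (p : ((grid n).induce S).Walk x y) :
    ((∑ i, (x : Fin n → ℤ) i : ℤ) : ZMod 2) + p.length = ((∑ i, (y : Fin n → ℤ) i : ℤ) : ZMod 2) := by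
  induction p with
  | nil => simp
  | cons h q ih =>
    rename_i a b c
    have hadj : (grid n).Adj (a : Fin n → ℤ) (b : Fin n → ℤ) := h
    obtain ⟨i, e, he, hb⟩ := grid_adj_iff.mp hadj
    have hsum : (∑ j, (b : Fin n → ℤ) j) = (∑ j, (a : Fin n → ℤ) j) + e := by
      rw [hb]; exact sum_step _ i he
    have he2 : ((e : ZMod 2)) = 1 := by rcases he with rfl | rfl <;> decide
    rw [SimpleGraph.Walk.length_cons, ← ih]
    rw [hsum]
    push_cast
    rw [he2]
    ring

lemma update_pointwise {n : ℕ} (x : Fin n → ℤ) (i : Fin n) (e : ℤ) (j : Fin n) :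
    Function.update x i (x i + e) j = if j = i then x j + e else x j := by
  rcases eq_or_ne j i with rfl | hj
  · simp
  · simp [Function.update_apply, hj]

lemma no_four_raw {n : ℕ} {x0 x1 x2 x3 : Fin n → ℤ}
    (m0 : sg x0 = 1 ∨ sg x0 = -1) (m1 : sg x1 = 1 ∨ sg x1 = -1)
    (m2 : sg x2 = 1 ∨ sg x2 = -1) (m3 : sg x3 = 1 ∨ sg x3 = -1)
    (a01 : (grid n).Adj x0 x1) (a12 : (grid n).Adj x1 x2)
    (a23 : (grid n).Adj x2 x3) (a30 : (grid n).Adj x3 x0)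
    (hne02 : x0 ≠ x2) (hne13 : x1 ≠ x3) : False := by
  obtain ⟨i0, e0, he0, hx1, P0, alt0⟩ := step_lemma m0 m1 a01
  obtain ⟨i1, e1, he1, hx2, P1, alt1⟩ := step_lemma m1 m2 a12
  obtain ⟨i2, e2, he2, hx3, P2, alt2⟩ := step_lemma m2 m3 a23
  obtain ⟨i3, e3, he3, hx0, P3, alt3⟩ := step_lemma m3 m0 a30
  have H0 : ∀ j, x1 j = if j = i0 then x0 j + e0 else x0 j := by
    intro j; rw [hx1]; exact update_pointwise x0 i0 e0 j
  have H1 : ∀ j, x2 j = if j = i1 then x1 j + e1 else x1 j := by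
    intro j; rw [hx2]; exact update_pointwise x1 i1 e1 j
  have H2 : ∀ j, x3 j = if j = i2 then x2 j + e2 else x2 j := by
    intro j; rw [hx3]; exact update_pointwise x2 i2 e2 j
  have H3 : ∀ j, x0 j = if j = i3 then x3 j + e3 else x3 j := by
    intro j; rw [hx0]; exact update_pointwise x3 i3 e3 j
  by_cases h10 : i1 = i0
  · have H1' : ∀ j, x2 j = if j = i0 then x1 j + e1 else x1 j := fun j => by rw [H1 j, h10]
    by_cases he10 : e1 = -e0
    · apply hne02; funext j
      have a0 := H0 j; have a1 := H1' j
      split_ifs at a0 a1 <;> omega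
    · have heq : e1 = e0 := by rcases he0 with rfl | rfl <;> rcases he1 with rfl | rfl <;> omega
      by_cases h20 : i2 = i0
      · have H2' : ∀ j, x3 j = if j = i0 then x2 j + e2 else x2 j := fun j => by rw [H2 j, h20]
        by_cases he2' : e2 = -e0
        · apply hne13; funext j
          have a0 := H0 j; have a1 := H1' j; have a2 := H2' j
          split_ifs at a0 a1 a2 <;> omega
        · have heq2 : e2 = e0 := by
            rcases he0 with rfl | rfl <;> rcases he2 with rfl | rfl <;> omega
          have b0 := H0 i0; rw [if_pos rfl] at b0
          have b1 := H1' i0; rw [if_pos rfl] at b1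
          have b2 := H2' i0; rw [if_pos rfl] at b2
          by_cases h3 : i0 = i3
          · have b3 := H3 i0; rw [if_pos h3] at b3
            rcases he0 with rfl | rfl <;> rcases he3 with rfl | rfl <;> omega
          · have b3 := H3 i0; rw [if_neg h3] at b3
            rcases he0 with rfl | rfl <;> omega
      · have b0 := H0 i0; rw [if_pos rfl] at b0
        have b1 := H1' i0; rw [if_pos rfl] at b1
        have b2 := H2 i0; rw [if_neg (fun hh : i0 = i2 => h20 hh.symm)] at b2
        by_cases h3 : i0 = i3
        · have c0 := H0 i2; rw [if_neg h20] at c0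
          have c1 := H1' i2; rw [if_neg h20] at c1
          have c2 := H2 i2; rw [if_pos rfl] at c2
          have d2 := H3 i2; rw [if_neg (fun hh : i2 = i3 => h20 (hh.trans h3.symm))] at d2
          rcases he2 with rfl | rfl <;> omega
        · have d0 := H3 i0; rw [if_neg h3] at d0
          rcases he0 with rfl | rfl <;> omega
  · by_cases h21 : i2 = i1
    · have H2' : ∀ j, x3 j = if j = i1 then x2 j + e2 else x2 j := fun j => by rw [H2 j, h21]
      by_cases he2' : e2 = -e1
      · apply hne13; funext j
        have a0 := H0 j; have a1 := H1 j; have a2 := H2' j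
        by_cases hj0 : j = i0 <;> by_cases hj1 : j = i1
        · exact absurd (hj1.symm.trans hj0) h10
        · rw [if_pos hj0] at a0; rw [if_neg hj1] at a1 a2; omega
        · rw [if_neg hj0] at a0; rw [if_pos hj1] at a1 a2; omega
        · rw [if_neg hj0] at a0; rw [if_neg hj1] at a1 a2; omega
      · have heq2 : e2 = e1 := by
          rcases he1 with rfl | rfl <;> rcases he2 with rfl | rfl <;> omega
        have b0 := H0 i1; rw [if_neg h10] at b0
        have b1 := H1 i1; rw [if_pos rfl] at b1
        have b2 := H2' i1; rw [if_pos rfl] at b2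
        have c0 := H0 i0; rw [if_pos rfl] at c0
        have c1 := H1 i0; rw [if_neg (fun hh : i0 = i1 => h10 hh.symm)] at c1
        have c2 := H2' i0; rw [if_neg (fun hh : i0 = i1 => h10 hh.symm)] at c2
        by_cases h3 : i0 = i3
        · have d1 := H3 i1; rw [if_neg (fun hh : i1 = i3 => h10 (hh.trans h3.symm))] at d1
          rcases he1 with rfl | rfl <;> omega
        · have d0 := H3 i0; rw [if_neg h3] at d0
          rcases he0 with rfl | rfl <;> omega
    · by_cases h20 : i2 = i0
      · have hh := H1 i2; rw [if_neg h21] at hh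
        have hh0 := H0 i2; rw [if_pos h20] at hh0
        have key2 : ((x2 i2).negOnePow : ℤ) = - ((x0 i2).negOnePow : ℤ) := by
          rw [hh, hh0]; exact negOnePow_add_unit he0
        have e1' : ((x2 i2).negOnePow : ℤ) = sg x0 := by rw [P2, alt1, alt0, neg_neg]
        have e2' : ((x0 i2).negOnePow : ℤ) = sg x0 := by rw [h20]; exact P0
        rw [e1', e2'] at key2
        rcases m0 with h | h <;> omega
      · have b0 := H0 i0; rw [if_pos rfl] at b0
        have b1 := H1 i0; rw [if_neg (fun hh : i0 = i1 => h10 hh.symm)] at b1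
        have b2 := H2 i0; rw [if_neg (fun hh : i0 = i2 => h20 hh.symm)] at b2
        have c0 := H0 i1; rw [if_neg h10] at c0
        have c1 := H1 i1; rw [if_pos rfl] at c1
        have c2 := H2 i1; rw [if_neg (fun hh : i1 = i2 => h21 hh.symm)] at c2
        by_cases h3 : i0 = i3
        · have d1 := H3 i1; rw [if_neg (fun hh : i1 = i3 => h10 (hh.trans h3.symm))] at d1
          rcases he1 with rfl | rfl <;> omega
        · have d0 := H3 i0; rw [if_neg h3] at d0
          rcases he0 with rfl | rfl <;> omega

lemma no_four_cycle {n : ℕ} {S : Set (Fin n → ℤ)}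
    (hmem : ∀ x ∈ S, sg x = 1 ∨ sg x = -1) {a : ↥S}
    (w : ((grid n).induce S).Walk a a) (hc : w.IsCycle) (hl : w.length = 4) : False := by
  cases w with
  | nil => simp at hl
  | @cons _ b _ h1 q =>
    cases q with
    | nil => simp at hl
    | @cons _ c _ h2 q =>
      cases q with
      | nil => simp at hl
      | @cons _ d _ h3 q =>
        cases q with
        | nil => simp at hl
        | @cons _ e _ h4 q =>
          cases q with
          | @cons _ f _ h5 q => simp [SimpleGraph.Walk.length_cons] at hl
          | nil =>
            have hn := (SimpleGraph.Walk.isCycle_def _).mp hc |>.2.2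
            simp only [SimpleGraph.Walk.support_cons, SimpleGraph.Walk.support_nil,
              List.tail_cons, List.nodup_cons, List.mem_cons, List.mem_singleton,
              List.not_mem_nil, List.nodup_nil] at hn
            have hbd : b ≠ d := by tauto
            have hca : c ≠ a := by tauto
            exact no_four_raw (hmem _ a.2) (hmem _ b.2) (hmem _ c.2) (hmem _ d.2)
              h1 h2 h3 h4
              (fun hh => hca (Subtype.ext hh.symm))
              (fun hh => hbd (Subtype.ext hh))

lemma egirth_lower {n : ℕ} {S : Set (Fin n → ℤ)}
    (hmem : ∀ x ∈ S, sg x = 1 ∨ sg x = -1) :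
    6 ≤ ((grid n).induce S).egirth := by
  rw [SimpleGraph.le_egirth]
  intro a w hw
  have h3 : 3 ≤ w.length := hw.three_le_length
  have heven : 2 ∣ w.length := by
    have hp := walk_parity w
    have h0 : ((w.length : ZMod 2)) = 0 := by linear_combination hp
    exact (ZMod.natCast_eq_zero_iff w.length 2).mp h0
  have h4 : w.length ≠ 4 := fun hl => no_four_cycle hmem w hw hl
  have : 6 ≤ w.length := by omega
  exact_mod_cast this

def Wf (n : ℕ) (a b c : ℤ) : Fin n → ℤ := fun t =>
  if (t : ℕ) = 0 then a else if (t : ℕ) = 1 then b else if (t : ℕ) = 2 then c else (t : ℤ)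

lemma sum_three {n : ℕ} (hn : 3 ≤ n) (F : Fin n → ℤ)
    (hF : ∀ j : Fin n, 3 ≤ (j : ℕ) → F j = 0) :
    ∑ j, F j = F ⟨0, by omega⟩ + F ⟨1, by omega⟩ + F ⟨2, by omega⟩ := by
  classical
  have hsub : ({⟨0, by omega⟩, ⟨1, by omega⟩, ⟨2, by omega⟩} : Finset (Fin n)) ⊆ Finset.univ :=
    Finset.subset_univ _
  rw [← Finset.sum_subset hsub]
  · rw [Finset.sum_insert (by simp [Fin.ext_iff]), Finset.sum_insert (by simp [Fin.ext_iff]),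
      Finset.sum_singleton]
    ring
  · intro j _ hj
    apply hF
    simp only [Finset.mem_insert, Finset.mem_singleton, Fin.ext_iff] at hj
    push_neg at hj
    omega

lemma Wf_apply0 {n : ℕ} (hn : 3 ≤ n) (a b c : ℤ) : Wf n a b c ⟨0, by omega⟩ = a := by
  simp [Wf]

lemma Wf_apply1 {n : ℕ} (hn : 3 ≤ n) (a b c : ℤ) : Wf n a b c ⟨1, by omega⟩ = b := by
  simp [Wf]

lemma Wf_apply2 {n : ℕ} (hn : 3 ≤ n) (a b c : ℤ) : Wf n a b c ⟨2, by omega⟩ = c := by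
  simp [Wf]

lemma Wf_large {n : ℕ} (a b c : ℤ) (j : Fin n) (hj : 3 ≤ (j : ℕ)) :
    Wf n a b c j = (j : ℤ) := by
  simp only [Wf]
  rw [if_neg (by omega), if_neg (by omega), if_neg (by omega)]

lemma grid_adj_W {n : ℕ} (hn : 3 ≤ n) {a b c a' b' c' : ℤ}
    (h : |a - a'| + |b - b'| + |c - c'| = 1) :
    (grid n).Adj (Wf n a b c) (Wf n a' b' c') := by
  show ∑ j, |Wf n a b c j - Wf n a' b' c' j| = 1
  rw [sum_three hn _ (fun j hj => by rw [Wf_large a b c j hj, Wf_large a' b' c' j hj]; simp)]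
  rw [Wf_apply0 hn, Wf_apply0 hn, Wf_apply1 hn, Wf_apply1 hn, Wf_apply2 hn, Wf_apply2 hn]
  exact h

lemma base_sum {n : ℕ} (hodd : Odd n) :
    ∑ j : Fin n, (((j : ℤ).negOnePow : ℤ)) = 1 := by
  have h1 : ∀ j : Fin n, (((j : ℤ).negOnePow : ℤ)) = (-1 : ℤ) ^ (j : ℕ) := by
    intro j
    exact_mod_cast Int.coe_negOnePow_natCast (j : ℕ)
  simp_rw [h1]
  rw [Fin.sum_univ_eq_sum_range (fun i => (-1 : ℤ) ^ i) n]
  rw [neg_one_geom_sum]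
  simp [Nat.not_even_iff_odd.mpr hodd]

lemma sg_W {n : ℕ} (hn : 3 ≤ n) (hodd : Odd n) (a b c : ℤ) :
    sg (Wf n a b c) = ((a.negOnePow : ℤ)) + ((b.negOnePow : ℤ)) + ((c.negOnePow : ℤ)) := by
  have key : ∑ j, ((((Wf n a b c j).negOnePow : ℤ)) - (((j : ℤ).negOnePow : ℤ)))
      = ((a.negOnePow : ℤ)) + ((b.negOnePow : ℤ)) + ((c.negOnePow : ℤ)) - 1 := by
    rw [sum_three hn _ (fun j hj => by rw [Wf_large a b c j hj]; ring)]
    rw [Wf_apply0 hn, Wf_apply1 hn, Wf_apply2 hn]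
    have e0 : (((0 : ℤ).negOnePow : ℤ)) = 1 := by
      rw [Int.negOnePow_zero]; rfl
    have e1 : (((1 : ℤ).negOnePow : ℤ)) = -1 := by
      rw [Int.negOnePow_one]; rfl
    have e2 : (((2 : ℤ).negOnePow : ℤ)) = 1 := by
      rw [Int.negOnePow_even 2 (by norm_num)]; rfl
    simp only [show ∀ h : (0 : ℕ) < n, (((⟨0, h⟩ : Fin n)) : ℤ) = (0 : ℤ) from fun _ => rfl,
      show ∀ h : (1 : ℕ) < n, (((⟨1, h⟩ : Fin n)) : ℤ) = (1 : ℤ) from fun _ => rfl,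
      show ∀ h : (2 : ℕ) < n, (((⟨2, h⟩ : Fin n)) : ℤ) = (2 : ℤ) from fun _ => rfl]
    push_cast
    rw [e0, e1, e2]
    ring
  have := Finset.sum_sub_distrib (s := (Finset.univ : Finset (Fin n)))
    (f := fun j => (((Wf n a b c j).negOnePow : ℤ))) (g := fun j => (((j : ℤ).negOnePow : ℤ)))
  rw [base_sum hodd] at this
  rw [key] at this
  unfold sg
  linarith

lemma egirth_upper {n : ℕ} (hn : 3 ≤ n) (hodd : Odd n) {S : Set (Fin n → ℤ)}
    (hS : S = {x | sg x = 1 ∨ sg x = -1}) : ((grid n).induce S).egirth ≤ 6 := by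
  have g0 : (((0 : ℤ).negOnePow : ℤ)) = 1 := by rw [Int.negOnePow_zero]; rfl
  have g1 : (((1 : ℤ).negOnePow : ℤ)) = -1 := by rw [Int.negOnePow_one]; rfl
  have g2 : (((2 : ℤ).negOnePow : ℤ)) = 1 := by rw [Int.negOnePow_even 2 (by norm_num)]; rfl
  have g3 : (((3 : ℤ).negOnePow : ℤ)) = -1 := by rw [Int.negOnePow_odd 3 ⟨1, by norm_num⟩]; rfl
  have memW : ∀ a b c : ℤ,
      (((a.negOnePow : ℤ)) + ((b.negOnePow : ℤ)) + ((c.negOnePow : ℤ)) = 1 ∨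
       ((a.negOnePow : ℤ)) + ((b.negOnePow : ℤ)) + ((c.negOnePow : ℤ)) = -1) →
      Wf n a b c ∈ S := by
    intro a b c h
    rw [hS]
    show sg (Wf n a b c) = 1 ∨ sg (Wf n a b c) = -1
    rw [sg_W hn hodd]
    exact h
  set v0 : ↥S := ⟨Wf n 0 1 2, memW 0 1 2 (Or.inl (by simp only [g0, g1, g2, g3]; norm_num))⟩ with hv0
  set v1 : ↥S := ⟨Wf n 1 1 2, memW 1 1 2 (Or.inr (by simp only [g0, g1, g2, g3]; norm_num))⟩ with hv1
  set v2 : ↥S := ⟨Wf n 1 2 2, memW 1 2 2 (Or.inl (by simp only [g0, g1, g2, g3]; norm_num))⟩ with hv2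
  set v3 : ↥S := ⟨Wf n 1 2 3, memW 1 2 3 (Or.inr (by simp only [g0, g1, g2, g3]; norm_num))⟩ with hv3
  set v4 : ↥S := ⟨Wf n 0 2 3, memW 0 2 3 (Or.inl (by simp only [g0, g1, g2, g3]; norm_num))⟩ with hv4
  set v5 : ↥S := ⟨Wf n 0 1 3, memW 0 1 3 (Or.inr (by simp only [g0, g1, g2, g3]; norm_num))⟩ with hv5
  have ha01 : ((grid n).induce S).Adj v0 v1 := by
    show (grid n).Adj (Wf n 0 1 2) (Wf n 1 1 2); exact grid_adj_W hn (by norm_num)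
  have ha12 : ((grid n).induce S).Adj v1 v2 := by
    show (grid n).Adj (Wf n 1 1 2) (Wf n 1 2 2); exact grid_adj_W hn (by norm_num)
  have ha23 : ((grid n).induce S).Adj v2 v3 := by
    show (grid n).Adj (Wf n 1 2 2) (Wf n 1 2 3); exact grid_adj_W hn (by norm_num)
  have ha34 : ((grid n).induce S).Adj v3 v4 := by
    show (grid n).Adj (Wf n 1 2 3) (Wf n 0 2 3); exact grid_adj_W hn (by norm_num)
  have ha45 : ((grid n).induce S).Adj v4 v5 := by
    show (grid n).Adj (Wf n 0 2 3) (Wf n 0 1 3); exact grid_adj_W hn (by norm_num)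
  have ha50 : ((grid n).induce S).Adj v5 v0 := by
    show (grid n).Adj (Wf n 0 1 3) (Wf n 0 1 2); exact grid_adj_W hn (by norm_num)
  have hne0 : ∀ {a b c a' b' c' : ℤ}, a ≠ a' → Wf n a b c ≠ Wf n a' b' c' := by
    intro a b c a' b' c' hne h
    exact hne (by rw [← Wf_apply0 hn a b c, ← Wf_apply0 hn a' b' c', h])
  have hne1 : ∀ {a b c a' b' c' : ℤ}, b ≠ b' → Wf n a b c ≠ Wf n a' b' c' := by
    intro a b c a' b' c' hne h
    exact hne (by rw [← Wf_apply1 hn a b c, ← Wf_apply1 hn a' b' c', h])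
  have hne2 : ∀ {a b c a' b' c' : ℤ}, c ≠ c' → Wf n a b c ≠ Wf n a' b' c' := by
    intro a b c a' b' c' hne h
    exact hne (by rw [← Wf_apply2 hn a b c, ← Wf_apply2 hn a' b' c', h])
  have mkne : ∀ {x y : ↥S}, ((x : Fin n → ℤ) ≠ (y : Fin n → ℤ)) → x ≠ y :=
    fun h hxy => h (congrArg Subtype.val hxy)
  have n01 : v0 ≠ v1 := mkne (hne0 (by norm_num))
  have n02 : v0 ≠ v2 := mkne (hne0 (by norm_num))
  have n03 : v0 ≠ v3 := mkne (hne0 (by norm_num))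
  have n04 : v0 ≠ v4 := mkne (hne1 (by norm_num))
  have n05 : v0 ≠ v5 := mkne (hne2 (by norm_num))
  have n12 : v1 ≠ v2 := mkne (hne1 (by norm_num))
  have n13 : v1 ≠ v3 := mkne (hne1 (by norm_num))
  have n14 : v1 ≠ v4 := mkne (hne0 (by norm_num))
  have n15 : v1 ≠ v5 := mkne (hne0 (by norm_num))
  have n23 : v2 ≠ v3 := mkne (hne2 (by norm_num))
  have n24 : v2 ≠ v4 := mkne (hne0 (by norm_num))
  have n25 : v2 ≠ v5 := mkne (hne0 (by norm_num))
  have n34 : v3 ≠ v4 := mkne (hne0 (by norm_num))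
  have n35 : v3 ≠ v5 := mkne (hne0 (by norm_num))
  have n45 : v4 ≠ v5 := mkne (hne1 (by norm_num))
  have hpath : (SimpleGraph.Walk.cons ha12 (.cons ha23 (.cons ha34 (.cons ha45
      (.cons ha50 .nil))))).IsPath := by
    rw [SimpleGraph.Walk.isPath_def]
    simp only [SimpleGraph.Walk.support_cons, SimpleGraph.Walk.support_nil, List.nodup_cons,
      List.mem_cons, List.mem_singleton, List.not_mem_nil, List.nodup_nil]
    simp [n12, n13, n14, n15, n23, n24, n25, n34, n35, n45,
      n01.symm, n02.symm, n03.symm, n04.symm, n05.symm]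
  have hedge : ¬ s(v0, v1) ∈ (SimpleGraph.Walk.cons ha12 (.cons ha23 (.cons ha34 (.cons ha45
      (.cons ha50 .nil))))).edges := by
    simp [SimpleGraph.Walk.edges_cons, Sym2.eq_iff,
      n01, n02, n03, n04, n05, n12, n13, n14, n15,
      n01.symm, n02.symm, n03.symm, n04.symm, n05.symm,
      n12.symm, n13.symm, n14.symm, n15.symm]
  have hcyc : (SimpleGraph.Walk.cons ha01 (SimpleGraph.Walk.cons ha12 (.cons ha23 (.cons ha34
      (.cons ha45 (.cons ha50 .nil)))))).IsCycle := by
    rw [SimpleGraph.Walk.cons_isCycle_iff]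
    exact ⟨hpath, hedge⟩
  refine le_trans (iInf_le _ v0) (le_trans (iInf_le _ (SimpleGraph.Walk.cons ha01
      (SimpleGraph.Walk.cons ha12 (.cons ha23 (.cons ha34 (.cons ha45 (.cons ha50 .nil)))))))
    (le_trans (iInf_le _ hcyc) ?_))
  norm_num [SimpleGraph.Walk.length_cons]

/-- The induced subgraph of the `n`-dimensional grid on `S` is `k`-regular:
every vertex has exactly `k` neighbours. -/
def IsRegularInduced (n : ℕ) (S : Set (Fin n → ℤ)) (k : ℕ) : Prop :=
  ∀ v : S, (((grid n).induce S).neighborSet v).ncard = k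

lemma regular_part {n : ℕ} {S : Set (Fin n → ℤ)}
    (hS : S = {x | sg x = 1 ∨ sg x = -1}) : IsRegularInduced n S (n + 1) := by
  intro v
  set x : Fin n → ℤ := (v : Fin n → ℤ) with hxdef
  have hs : sg x = 1 ∨ sg x = -1 := (Set.ext_iff.mp hS _).mp v.2
  set s : ℤ := sg x with hsdef
  -- the injection
  set F : Fin n × Bool → (Fin n → ℤ) :=
    fun p => Function.update x p.1 (x p.1 + (if p.2 then 1 else -1)) with hF
  have hFinj : Function.Injective F := by
    rintro ⟨i, b⟩ ⟨j, c⟩ h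
    simp only [hF] at h
    by_cases hij : i = j
    · subst hij
      have h2 := congrFun h i
      rw [Function.update_self, Function.update_self] at h2
      cases b <;> cases c <;> simp_all
    · have h2 := congrFun h i
      rw [Function.update_self, Function.update_apply, if_neg hij] at h2
      cases b <;> simp at h2 <;> omega
  set A : Set (Fin n × Bool) := {p | ((x p.1).negOnePow : ℤ) = s} with hA
  have himg : Subtype.val '' (((grid n).induce S).neighborSet v) = F '' A := by
    ext y
    constructor
    · rintro ⟨w, hw, rfl⟩
      have hadj : (grid n).Adj x (w : Fin n → ℤ) := hw
      have hwS : sg (w : Fin n → ℤ) = 1 ∨ sg (w : Fin n → ℤ) = -1 :=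
        (Set.ext_iff.mp hS _).mp w.2
      obtain ⟨i, e, he, heq, P, _⟩ := step_lemma hs hwS hadj
      rcases he with rfl | rfl
      · exact ⟨(i, true), P, by rw [heq]; simp [hF]⟩
      · exact ⟨(i, false), P, by rw [heq]; simp [hF]⟩
    · rintro ⟨⟨i, b⟩, hp, rfl⟩
      have hp' : ((x i).negOnePow : ℤ) = s := hp
      have he : (if b then (1:ℤ) else -1) = 1 ∨ (if b then (1:ℤ) else -1) = -1 := by
        cases b <;> simp
      have hmemS : F (i, b) ∈ S := by
        rw [hS]
        show sg (F (i, b)) = 1 ∨ sg (F (i, b)) = -1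
        have : sg (F (i, b)) = sg x - 2 * ((x i).negOnePow : ℤ) := sigma_update x i he
        rw [this, hp']
        rcases hs with h | h <;> rw [← hsdef, h] <;> norm_num
      have hadj : (grid n).Adj x (F (i, b)) := grid_adj_iff.mpr ⟨i, _, he, rfl⟩
      exact ⟨⟨F (i, b), hmemS⟩, hadj, rfl⟩
  have hcount : A.ncard = 2 * (Finset.univ.filter
      (fun i : Fin n => ((x i).negOnePow : ℤ) = s)).card := by
    classical
    have : A = ↑((Finset.univ.filter (fun i : Fin n => ((x i).negOnePow : ℤ) = s)) ×ˢ
        (Finset.univ : Finset Bool)) := by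
      ext ⟨i, b⟩
      simp [hA, Finset.mem_product]
    rw [this, Set.ncard_coe_finset, Finset.card_product]
    simp [Nat.mul_comm]
  have hcard : (Finset.univ.filter (fun i : Fin n => ((x i).negOnePow : ℤ) = s)).card * 2
      = n + 1 := by
    have hpm : ∀ i : Fin n, ((x i).negOnePow : ℤ) = 1 ∨ ((x i).negOnePow : ℤ) = -1 :=
      fun i => negOnePow_pm (x i)
    have htot : (∑ i, ((x i).negOnePow : ℤ)) = s := hsdef.symm
    rcases hs with h | h
    · have hterm : ∀ i : Fin n, ((x i).negOnePow : ℤ) + 1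
          = if ((x i).negOnePow : ℤ) = s then 2 else 0 := by
        intro i
        rcases hpm i with h' | h' <;> rw [h', h] <;> norm_num
      have hsum : ∑ i, (((x i).negOnePow : ℤ) + 1) = s + n := by
        rw [Finset.sum_add_distrib, htot]
        simp [mul_comm]
      rw [Finset.sum_congr rfl (fun i _ => hterm i), Finset.sum_ite, Finset.sum_const,
        Finset.sum_const_zero, nsmul_eq_mul, h] at hsum
      rw [h]
      omega
    · have hterm : ∀ i : Fin n, 1 - ((x i).negOnePow : ℤ)
          = if ((x i).negOnePow : ℤ) = s then 2 else 0 := by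
        intro i
        rcases hpm i with h' | h' <;> rw [h', h] <;> norm_num
      have hsum : ∑ i, (1 - ((x i).negOnePow : ℤ)) = n - s := by
        rw [Finset.sum_sub_distrib, htot]
        simp [mul_comm]
      rw [Finset.sum_congr rfl (fun i _ => hterm i), Finset.sum_ite, Finset.sum_const,
        Finset.sum_const_zero, nsmul_eq_mul, h] at hsum
      rw [h]
      omega
  rw [← Set.ncard_image_of_injective _ Subtype.val_injective, himg,
    Set.ncard_image_of_injective _ hFinj, hcount]
  omega


theorem regular_girth_six_example (n : ℕ) (hn : 3 ≤ n) (hodd : Odd n)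
    (S : Set (Fin n → ℤ))
    (hS : S = {x | ∑ i, ((x i).negOnePow : ℤ) = 1 ∨ ∑ i, ((x i).negOnePow : ℤ) = -1}) :
    IsRegularInduced n S (n + 1) ∧ ((grid n).induce S).egirth = 6 := by
  have hS' : S = {x | sg x = 1 ∨ sg x = -1} := hS
  have hmem : ∀ x ∈ S, sg x = 1 ∨ sg x = -1 := fun x hx => (Set.ext_iff.mp hS' _).mp hx
  exact ⟨regular_part hS', le_antisymm (egirth_upper hn hodd hS') (egirth_lower hmem)⟩
end

section
/- Let Γ be a 6-regular induced subgraph of the 6-dimensional grid, and suppose there exists a vertex u of Γ and a neighbour v of u in Γ such that the antipodal point 2u − v is not in the vertex set of Γ (i.e., the neighbours of u do not match up in antipodal pairs). Then the girth of Γ is at most 6. -/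
namespace GridAux

abbrev Pt := Fin 6 → ℤ
abbrev Dir := Fin 6 × Bool

def sgn (b : Bool) : ℤ := if b then 1 else -1

lemma sgn_ne_zero (b : Bool) : sgn b ≠ 0 := by cases b <;> simp [sgn]

lemma sgn_abs (b : Bool) : |sgn b| = 1 := by cases b <;> simp [sgn]

def vec (d : Dir) : Pt := fun j => if j = d.1 then sgn d.2 else 0

lemma vec_apply (d : Dir) (j : Fin 6) : vec d j = if j = d.1 then sgn d.2 else 0 := rfl

def negd (d : Dir) : Dir := (d.1, !d.2)

lemma vec_negd (d : Dir) : vec (negd d) = -vec d := by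
  funext j
  simp only [vec, negd, Pi.neg_apply]
  cases d.2 <;> split <;> simp [sgn] <;> assumption

lemma adj_add_vec (x : Pt) (d : Dir) : (grid 6).Adj x (x + vec d) := by
  show ∑ i, |x i - (x + vec d) i| = 1
  have : ∀ i, |x i - (x + vec d) i| = if i = d.1 then 1 else 0 := by
    intro i
    simp only [Pi.add_apply, vec_apply]
    split
    · simp [abs_sub_comm, sgn_abs]
    · simp
  rw [Finset.sum_congr rfl fun i _ => this i]
  simp

lemma adj_to_vec {x y : Pt} (h : (grid 6).Adj x y) : ∃ d : Dir, y = x + vec d := by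
  have hsum : ∑ i, |x i - y i| = 1 := h
  have hne : ∃ i, x i ≠ y i := by
    by_contra hc
    push_neg at hc
    simp [hc] at hsum
  obtain ⟨i, hi⟩ := hne
  have h1 : 1 ≤ |x i - y i| := by
    have : x i - y i ≠ 0 := sub_ne_zero.mpr hi
    rcases abs_pos.mpr this with h'
    omega
  have hle : |x i - y i| ≤ 1 := by
    rw [← hsum]
    exact Finset.single_le_sum (f := fun j => |x j - y j|) (fun j _ => abs_nonneg _)
      (Finset.mem_univ i)
  have heq1 : |x i - y i| = 1 := le_antisymm hle h1
  have hrest : ∀ j, j ≠ i → x j = y j := by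
    intro j hj
    have hz : ∑ k ∈ Finset.univ.erase i, |x k - y k| = 0 := by
      have h2 := Finset.add_sum_erase Finset.univ (fun k => |x k - y k|) (Finset.mem_univ i)
      linarith
    have := Finset.sum_eq_zero_iff_of_nonneg (fun k _ => abs_nonneg (x k - y k)) |>.mp hz j
      (Finset.mem_erase.mpr ⟨hj, Finset.mem_univ j⟩)
    have : x j - y j = 0 := abs_eq_zero.mp this
    omega
  refine ⟨(i, decide (y i = x i + 1)), ?_⟩
  funext j
  simp only [Pi.add_apply, vec_apply]
  by_cases hji : j = i
  · subst hji
    simp only [if_pos rfl]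
    rcases abs_eq (by norm_num : (0:ℤ) ≤ 1) |>.mp heq1 with h' | h'
    · have : y j ≠ x j + 1 := by omega
      simp [this, sgn]; omega
    · have : y j = x j + 1 := by omega
      simp [this, sgn]
  · rw [if_neg hji]
    have := hrest j hji
    omega

lemma vec_inj {d d' : Dir} (h : vec d = vec d') : d = d' := by
  have h1 := congrFun h d.1
  by_cases hd : d.1 = d'.1
  · have h2 : sgn d.2 = sgn d'.2 := by
      simpa [vec_apply, hd] using h1
    have : d.2 = d'.2 := by
      rcases d with ⟨i, b⟩; rcases d' with ⟨i', b'⟩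
      cases b <;> cases b' <;> simp_all [sgn]
    exact Prod.ext hd this
  · exfalso
    have : sgn d.2 = 0 := by
      simpa [vec_apply, Ne.symm hd, hd] using h1
    exact sgn_ne_zero _ this

lemma add_vec_inj (x : Pt) {d d' : Dir} (h : x + vec d = x + vec d') : d = d' :=
  vec_inj (by have := add_left_cancel h; exact this)

/-- The set of directions from `x` that stay in `S`. -/
noncomputable def Dset (S : Set Pt) (x : Pt) : Finset Dir :=
  @Finset.filter _ (fun d => x + vec d ∈ S) (Classical.decPred _) Finset.univ

lemma mem_Dset {S : Set Pt} {x : Pt} {d : Dir} : d ∈ Dset S x ↔ x + vec d ∈ S := by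
  simp [Dset, Finset.mem_filter]

def IsRegularInduced' (n : ℕ) (S : Set (Fin n → ℤ)) (k : ℕ) : Prop :=
  ∀ v : S, (((grid n).induce S).neighborSet v).ncard = k

lemma card_Dset {S : Set Pt} (hreg : IsRegularInduced' 6 S 6) {x : Pt} (hx : x ∈ S) :
    (Dset S x).card = 6 := by
  classical
  have h := hreg ⟨x, hx⟩
  have himg : Subtype.val '' (((grid 6).induce S).neighborSet ⟨x, hx⟩)
      = ↑((Dset S x).image (fun d => x + vec d)) := by
    ext y
    constructor
    · rintro ⟨w, hw, rfl⟩
      have hadj : (grid 6).Adj x ↑w := hw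
      obtain ⟨d, hd⟩ := adj_to_vec hadj
      have : d ∈ Dset S x := mem_Dset.mpr (hd ▸ w.2)
      exact Finset.mem_coe.mpr (Finset.mem_image.mpr ⟨d, this, hd.symm⟩)
    · intro hy
      obtain ⟨d, hd, rfl⟩ := Finset.mem_image.mp (Finset.mem_coe.mp hy)
      have hmem : x + vec d ∈ S := mem_Dset.mp hd
      refine ⟨⟨x + vec d, hmem⟩, ?_, rfl⟩
      show (grid 6).Adj x (x + vec d)
      exact adj_add_vec x d
  have h1 : (Subtype.val '' (((grid 6).induce S).neighborSet ⟨x, hx⟩)).ncard = 6 := by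
    rw [Set.ncard_image_of_injective _ Subtype.val_injective, h]
  rw [himg, Set.ncard_coe_finset,
    Finset.card_image_of_injective _ (fun a b hab => add_vec_inj x hab)] at h1
  exact h1

section Cycles
open SimpleGraph Walk

variable {V : Type*} {G : SimpleGraph V}

lemma egirth_le_four {a b c d : V} (h1 : G.Adj a b) (h2 : G.Adj b c) (h3 : G.Adj c d)
    (h4 : G.Adj d a) (hac : a ≠ c) (hbd : b ≠ d) : G.egirth ≤ 4 := by
  let w : G.Walk a a := Walk.cons h1 (Walk.cons h2 (Walk.cons h3 (Walk.cons h4 Walk.nil)))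
  have hcyc : w.IsCycle := by
    simp only [w, Walk.isCycle_def, Walk.isTrail_def, Walk.edges_cons, Walk.edges_nil,
      Walk.support_cons, Walk.support_nil, List.tail_cons]
    refine ⟨?_, by simp, ?_⟩
    · simp only [List.nodup_cons, List.mem_cons, List.not_mem_nil, or_false, List.mem_singleton,
        List.nodup_nil, and_true, Sym2.eq, Sym2.rel_iff', Prod.mk.injEq, Prod.swap_prod_mk,
        not_or]
      have n1 := h1.ne; have n2 := h2.ne; have n3 := h3.ne; have n4 := h4.ne
      refine ⟨⟨?_, ?_, ?_⟩, ⟨?_, ?_⟩, ?_⟩ <;> simp_all <;> tauto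
    · simp only [List.nodup_cons, List.mem_cons, List.not_mem_nil, or_false, List.mem_singleton,
        List.nodup_nil, and_true, not_or]
      exact ⟨⟨h2.ne, hbd, h1.ne'⟩, ⟨h3.ne, Ne.symm hac⟩, h4.ne, not_false⟩
  have hle := SimpleGraph.le_egirth.mp le_rfl a w hcyc
  have : w.length = 4 := by simp [w]
  rw [this] at hle
  exact_mod_cast hle

lemma egirth_le_six {a b c d e f : V} (h1 : G.Adj a b) (h2 : G.Adj b c) (h3 : G.Adj c d)
    (h4 : G.Adj d e) (h5 : G.Adj e f) (h6 : G.Adj f a)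
    (n13 : a ≠ c) (n14 : a ≠ d) (n15 : a ≠ e) (n24 : b ≠ d) (n25 : b ≠ e) (n26 : b ≠ f)
    (n35 : c ≠ e) (n36 : c ≠ f) (n46 : d ≠ f) : G.egirth ≤ 6 := by
  let w : G.Walk a a := Walk.cons h1 (Walk.cons h2 (Walk.cons h3 (Walk.cons h4
    (Walk.cons h5 (Walk.cons h6 Walk.nil)))))
  have hcyc : w.IsCycle := by
    simp only [w, Walk.isCycle_def, Walk.isTrail_def, Walk.edges_cons, Walk.edges_nil,
      Walk.support_cons, Walk.support_nil, List.tail_cons]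
    refine ⟨?_, by simp, ?_⟩
    · simp only [List.nodup_cons, List.mem_cons, List.not_mem_nil, or_false, List.mem_singleton,
        List.nodup_nil, and_true, Sym2.eq, Sym2.rel_iff', Prod.mk.injEq, Prod.swap_prod_mk,
        not_or]
      have m1 := h1.ne; have m2 := h2.ne; have m3 := h3.ne; have m4 := h4.ne
      have m5 := h5.ne; have m6 := h6.ne
      refine ⟨⟨?_,?_,?_,?_,?_⟩,⟨?_,?_,?_,?_⟩,⟨?_,?_,?_⟩,⟨?_,?_⟩,?_⟩ <;> simp_all <;> tauto
    · simp only [List.nodup_cons, List.mem_cons, List.not_mem_nil, or_false, List.mem_singleton,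
        List.nodup_nil, and_true, not_or]
      have m1 := h1.ne; have m2 := h2.ne; have m3 := h3.ne; have m4 := h4.ne
      have m5 := h5.ne; have m6 := h6.ne
      refine ⟨⟨?_,?_,?_,?_,?_⟩,⟨?_,?_,?_,?_⟩,⟨?_,?_,?_⟩,⟨?_,?_⟩,?_⟩ <;> simp_all <;> tauto
  have hle := SimpleGraph.le_egirth.mp le_rfl a w hcyc
  have hl : w.length = 6 := by simp [w]
  rw [hl] at hle
  exact_mod_cast hle

end Cycles

section Config

lemma ne_of_apply_ne' {p q : Pt} (i : Fin 6) (h : p i ≠ q i) : p ≠ q :=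
  fun hh => h (congrFun hh i)

lemma sub_ne {S' : Set Pt} {p q : Pt} {hp : p ∈ S'} {hq : q ∈ S'} (i : Fin 6)
    (h : p i ≠ q i) : (⟨p, hp⟩ : S') ≠ ⟨q, hq⟩ :=
  fun hh => ne_of_apply_ne' i h (congrArg Subtype.val hh)

variable {S : Set Pt}

lemma no4 (hg : ¬ ((grid 6).induce S).egirth ≤ 6)
    {x : Pt} {d d' : Dir} (hdd : d.1 ≠ d'.1) (hx : x ∈ S) (h1 : x + vec d ∈ S)
    (h2 : x + vec d' ∈ S) (h3 : x + vec d + vec d' ∈ S) : False := by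
  apply hg
  have hsd := sgn_ne_zero d.2
  have hsd' := sgn_ne_zero d'.2
  refine le_trans (egirth_le_four (G := (grid 6).induce S)
    (a := ⟨x, hx⟩) (b := ⟨x + vec d, h1⟩) (c := ⟨x + vec d + vec d', h3⟩)
    (d := ⟨x + vec d', h2⟩) ?_ ?_ ?_ ?_ ?_ ?_) (by norm_num)
  · exact adj_add_vec x d
  · exact adj_add_vec (x + vec d) d'
  · have he : x + vec d + vec d' = (x + vec d') + vec d := by ring
    exact (he ▸ adj_add_vec (x + vec d') d).symm
  · exact (adj_add_vec x d').symm
  · exact sub_ne d.1 (by simp [vec_apply, Ne.symm hdd]; omega)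
  · exact sub_ne d.1 (by simp [vec_apply, Ne.symm hdd]; omega)

lemma no6 (hg : ¬ ((grid 6).induce S).egirth ≤ 6)
    {x : Pt} {a b c : Dir} (hab : a.1 ≠ b.1) (hac : a.1 ≠ c.1) (hbc : b.1 ≠ c.1)
    (k0 : x ∈ S) (k1 : x + vec a ∈ S) (k2 : x + vec a + vec b ∈ S)
    (k3 : x + vec a + vec b + vec c ∈ S) (k4 : x + vec b + vec c ∈ S)
    (k5 : x + vec c ∈ S) : False := by
  apply hg
  have hsa := sgn_ne_zero a.2
  have hsb := sgn_ne_zero b.2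
  have hsc := sgn_ne_zero c.2
  refine egirth_le_six (G := (grid 6).induce S)
    (a := ⟨x, k0⟩) (b := ⟨x + vec a, k1⟩) (c := ⟨x + vec a + vec b, k2⟩)
    (d := ⟨x + vec a + vec b + vec c, k3⟩) (e := ⟨x + vec b + vec c, k4⟩)
    (f := ⟨x + vec c, k5⟩) ?_ ?_ ?_ ?_ ?_ ?_ ?_ ?_ ?_ ?_ ?_ ?_ ?_ ?_ ?_
  · exact adj_add_vec x a
  · exact adj_add_vec (x + vec a) b
  · exact adj_add_vec (x + vec a + vec b) c
  · have he : x + vec a + vec b + vec c = (x + vec b + vec c) + vec a := by ring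
    exact (he ▸ adj_add_vec (x + vec b + vec c) a).symm
  · have he : x + vec b + vec c = (x + vec c) + vec b := by ring
    exact (he ▸ adj_add_vec (x + vec c) b).symm
  · exact (adj_add_vec x c).symm
  · exact sub_ne a.1 (by simp [vec_apply, hab, hac, hbc, Ne.symm hab, Ne.symm hac, Ne.symm hbc]; omega)
  · exact sub_ne a.1 (by simp [vec_apply, hab, hac, hbc, Ne.symm hab, Ne.symm hac, Ne.symm hbc]; omega)
  · exact sub_ne b.1 (by simp [vec_apply, hab, hac, hbc, Ne.symm hab, Ne.symm hac, Ne.symm hbc]; omega)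
  · exact sub_ne b.1 (by simp [vec_apply, hab, hac, hbc, Ne.symm hab, Ne.symm hac, Ne.symm hbc]; omega)
  · exact sub_ne a.1 (by simp [vec_apply, hab, hac, hbc, Ne.symm hab, Ne.symm hac, Ne.symm hbc]; omega)
  · exact sub_ne a.1 (by simp [vec_apply, hab, hac, hbc, Ne.symm hab, Ne.symm hac, Ne.symm hbc]; omega)
  · exact sub_ne a.1 (by simp [vec_apply, hab, hac, hbc, Ne.symm hab, Ne.symm hac, Ne.symm hbc]; omega)
  · exact sub_ne a.1 (by simp [vec_apply, hab, hac, hbc, Ne.symm hab, Ne.symm hac, Ne.symm hbc]; omega)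
  · exact sub_ne a.1 (by simp [vec_apply, hab, hac, hbc, Ne.symm hab, Ne.symm hac, Ne.symm hbc]; omega)

end Config



lemma eq_or_negd_of_axis {a b : Dir} (h : a.1 = b.1) : a = b ∨ a = negd b := by
  rcases a with ⟨i, ba⟩; rcases b with ⟨j, bb⟩
  simp only at h; subst h
  cases ba <;> cases bb <;> simp [negd]

lemma main_lemma {S : Set Pt} (hreg : IsRegularInduced' 6 S 6)
    (u v : Pt) (hu : u ∈ S) (hv : v ∈ S) (hadj : (grid 6).Adj u v)
    (hanti : (fun i => 2 * u i - v i) ∉ S) :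
    ((grid 6).induce S).egirth ≤ 6 := by
  by_contra hg
  classical
  obtain ⟨d₀, hd₀⟩ := adj_to_vec hadj
  subst hd₀
  have hanti' : u + vec (negd d₀) ∉ S := by
    intro hmem; apply hanti
    have he : (fun i => 2 * u i - (u + vec d₀) i) = u + vec (negd d₀) := by
      funext i; simp [vec_negd, Pi.add_apply]; ring
    rw [he]; exact hmem
  set Du := Dset S u with hDudef
  set Dv := Dset S (u + vec d₀) with hDvdef
  have hDu : Du.card = 6 := card_Dset hreg hu
  have hDv : Dv.card = 6 := card_Dset hreg hv
  have hd₀Du : d₀ ∈ Du := mem_Dset.mpr hv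
  have hnd₀Du : negd d₀ ∉ Du := fun h => hanti' (mem_Dset.mp h)
  have hnd₀Dv : negd d₀ ∈ Dv := by
    rw [hDvdef, mem_Dset, vec_negd]
    have : u + vec d₀ + -vec d₀ = u := by ring
    rw [this]; exact hu
  set A := Du.erase d₀ with hAdef
  have hA : A.card = 5 := by rw [hAdef, Finset.card_erase_of_mem hd₀Du, hDu]
  set Cv := (Dv.erase d₀).erase (negd d₀) with hCvdef
  set s := Cv.card with hsdef
  have hs4 : 4 ≤ s := by
    have h1 : Dv.card - 1 ≤ (Dv.erase d₀).card := Finset.pred_card_le_card_erase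
    have h2 : (Dv.erase d₀).card - 1 ≤ s := Finset.pred_card_le_card_erase
    omega
  -- axis facts
  have haxA : ∀ a ∈ A, a.1 ≠ d₀.1 := by
    intro a ha hax
    rcases eq_or_negd_of_axis hax with rfl | rfl
    · exact (Finset.notMem_erase _ _) ha
    · exact hnd₀Du (Finset.mem_of_mem_erase ha)
  have haxC : ∀ c ∈ Cv, c.1 ≠ d₀.1 := by
    intro c hc hax
    rcases eq_or_negd_of_axis hax with rfl | rfl
    · exact (Finset.notMem_erase _ _) (Finset.mem_of_mem_erase hc)
    · exact (Finset.notMem_erase _ _) hc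
  have hCvDv : ∀ c ∈ Cv, c ∈ Dv := fun c hc =>
    Finset.mem_of_mem_erase (Finset.mem_of_mem_erase hc)
  have hADu : ∀ a ∈ A, a ∈ Du := fun a ha => Finset.mem_of_mem_erase ha
  -- F1 facts
  have hAv : ∀ a ∈ A, a ∉ Dv := by
    intro a ha hav
    exact no4 hg (Ne.symm (haxA a ha)) hu hv (mem_Dset.mp (hADu a ha)) (mem_Dset.mp hav)
  have hCu : ∀ c ∈ Cv, c ∉ Du := by
    intro c hc hcu
    exact no4 hg (Ne.symm (haxC c hc)) hu hv (mem_Dset.mp hcu) (mem_Dset.mp (hCvDv c hc))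
  -- the two local sets
  set R : Dir → Finset Dir := fun d => Cv.filter (fun c => c.1 ≠ d.1 ∧ u + vec d + vec c ∈ S)
    with hRdef
  set L : Dir → Finset Dir := fun c => A.filter (fun d => d.1 ≠ c.1 ∧ u + vec d + vec c ∉ S)
    with hLdef
  have huniv : (Finset.univ : Finset Dir).card = 12 := by simp
  -- R bound
  have hRbound : ∀ d ∈ A, s ≤ (R d).card + 2 := by
    intro d hd
    set M := (Finset.univ \ Du) \ (Cv ∪ {negd d₀}) with hMdef
    have hsubM : Cv ∪ {negd d₀} ⊆ Finset.univ \ Du := by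
      intro z hz
      rcases Finset.mem_union.mp hz with hz | hz
      · exact Finset.mem_sdiff.mpr ⟨Finset.mem_univ _, hCu z hz⟩
      · rw [Finset.mem_singleton] at hz; subst hz
        exact Finset.mem_sdiff.mpr ⟨Finset.mem_univ _, hnd₀Du⟩
    have hcard1 : (Finset.univ \ Du).card = 6 := by
      rw [Finset.card_sdiff_of_subset (Finset.subset_univ _), huniv, hDu]
    have hcardU : (Cv ∪ {negd d₀}).card = s + 1 := by
      rw [Finset.card_union_of_disjoint, Finset.card_singleton]
      simp only [Finset.disjoint_singleton_right]
      exact Finset.notMem_erase _ _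
    have hM : M.card + (s + 1) = 6 := by
      rw [hMdef, Finset.card_sdiff_of_subset hsubM, hcardU, hcard1]
      have := Finset.card_le_card hsubM
      omega
    have hDd : (Dset S (u + vec d)).card = 6 := card_Dset hreg (mem_Dset.mp (hADu d hd))
    have hsub : Dset S (u + vec d) ⊆
        insert d (insert (negd d) (insert (negd d₀) (M ∪ R d))) := by
      intro δ hδ
      have hδS : u + vec d + vec δ ∈ S := mem_Dset.mp hδ
      by_cases h1 : δ = d
      · exact Finset.mem_insert.mpr (Or.inl h1)
      by_cases h2 : δ = negd d
      · exact Finset.mem_insert.mpr (Or.inr (Finset.mem_insert.mpr (Or.inl h2)))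
      have hax : δ.1 ≠ d.1 := by
        intro h; rcases eq_or_negd_of_axis h with h | h
        · exact h1 h
        · exact h2 h
      have hδu : δ ∉ Du := by
        intro hδu
        exact no4 hg (Ne.symm hax) hu (mem_Dset.mp (hADu d hd)) (mem_Dset.mp hδu) hδS
      by_cases h3 : δ = negd d₀
      · exact Finset.mem_insert.mpr (Or.inr (Finset.mem_insert.mpr (Or.inr
          (Finset.mem_insert.mpr (Or.inl h3)))))
      by_cases h4 : δ ∈ Cv
      · refine Finset.mem_insert.mpr (Or.inr (Finset.mem_insert.mpr (Or.inr
          (Finset.mem_insert.mpr (Or.inr (Finset.mem_union.mpr (Or.inr ?_)))))))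
        rw [hRdef]; exact Finset.mem_filter.mpr ⟨h4, hax, hδS⟩
      · refine Finset.mem_insert.mpr (Or.inr (Finset.mem_insert.mpr (Or.inr
          (Finset.mem_insert.mpr (Or.inr (Finset.mem_union.mpr (Or.inl ?_)))))))
        rw [hMdef]
        refine Finset.mem_sdiff.mpr ⟨Finset.mem_sdiff.mpr ⟨Finset.mem_univ _, hδu⟩, ?_⟩
        intro hz
        rcases Finset.mem_union.mp hz with hz | hz
        · exact h4 hz
        · exact h3 (Finset.mem_singleton.mp hz)
    have hle := Finset.card_le_card hsub
    rw [hDd] at hle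
    have hle2 := le_trans hle (Finset.card_insert_le _ _)
    have hle3 := le_trans (Nat.le_of_succ_le_succ hle2) (Finset.card_insert_le _ _)
    have hle4 := le_trans (Nat.le_of_succ_le_succ hle3) (Finset.card_insert_le _ _)
    have hle5 := le_trans (Nat.le_of_succ_le_succ hle4) (Finset.card_union_le _ _)
    omega
  -- L bound
  have hLbound : ∀ c ∈ Cv, 3 ≤ (L c).card := by
    intro c hc
    set W := (Finset.univ \ Dv) \ A with hWdef
    have hsubA : A ⊆ Finset.univ \ Dv := fun a ha =>
      Finset.mem_sdiff.mpr ⟨Finset.mem_univ _, hAv a ha⟩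
    have hW : W.card = 1 := by
      rw [hWdef, Finset.card_sdiff_of_subset hsubA, Finset.card_sdiff_of_subset (Finset.subset_univ _), huniv,
        hDv, hA]
    have hxS : u + vec d₀ + vec c ∈ S := mem_Dset.mp (hCvDv c hc)
    have hDx : (Dset S (u + vec d₀ + vec c)).card = 6 := card_Dset hreg hxS
    have hsub : Dset S (u + vec d₀ + vec c) ⊆
        insert c (insert (negd c) (W ∪ L c)) := by
      intro δ hδ
      have hδS : u + vec d₀ + vec c + vec δ ∈ S := mem_Dset.mp hδ
      by_cases h1 : δ = c
      · exact Finset.mem_insert.mpr (Or.inl h1)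
      by_cases h2 : δ = negd c
      · exact Finset.mem_insert.mpr (Or.inr (Finset.mem_insert.mpr (Or.inl h2)))
      have hax : δ.1 ≠ c.1 := by
        intro h; rcases eq_or_negd_of_axis h with h | h
        · exact h1 h
        · exact h2 h
      have hδv : δ ∉ Dv := by
        intro hδv
        exact no4 hg (Ne.symm hax) hv (mem_Dset.mp (hCvDv c hc)) (mem_Dset.mp hδv) hδS
      by_cases h3 : δ ∈ A
      · refine Finset.mem_insert.mpr (Or.inr (Finset.mem_insert.mpr (Or.inr
          (Finset.mem_union.mpr (Or.inr ?_)))))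
        rw [hLdef]
        refine Finset.mem_filter.mpr ⟨h3, hax, ?_⟩
        intro hmem
        have hmem' : u + vec c + vec δ ∈ S := by
          have he : u + vec c + vec δ = u + vec δ + vec c := by ring
          rw [he]; exact hmem
        exact no6 hg (Ne.symm (haxC c hc)) (Ne.symm (haxA δ h3)) (Ne.symm hax)
          hu hv hxS hδS hmem' (mem_Dset.mp (hADu δ h3))
      · refine Finset.mem_insert.mpr (Or.inr (Finset.mem_insert.mpr (Or.inr
          (Finset.mem_union.mpr (Or.inl ?_)))))
        rw [hWdef]
        exact Finset.mem_sdiff.mpr ⟨Finset.mem_sdiff.mpr ⟨Finset.mem_univ _, hδv⟩, h3⟩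
    have hle := Finset.card_le_card hsub
    rw [hDx] at hle
    have hle2 := le_trans hle (Finset.card_insert_le _ _)
    have hle3 := le_trans (Nat.le_of_succ_le_succ hle2) (Finset.card_insert_le _ _)
    have hle4 := le_trans (Nat.le_of_succ_le_succ hle3) (Finset.card_union_le _ _)
    omega
  -- double counting
  set T := A.biUnion (fun d => {d} ×ˢ R d) with hTdef
  set coT := Cv.biUnion (fun c => (L c) ×ˢ {c}) with hcoTdef
  have hTcard : T.card = ∑ d ∈ A, (R d).card := by
    rw [hTdef, Finset.card_biUnion]
    · exact Finset.sum_congr rfl fun d _ => by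
        rw [Finset.card_product, Finset.card_singleton, one_mul]
    · intro d hd d' hd' hne
      rw [Function.onFun, Finset.disjoint_left]
      intro p hp hp'
      have e1 : p.1 = d := Finset.mem_singleton.mp (Finset.mem_product.mp hp).1
      have e2 : p.1 = d' := Finset.mem_singleton.mp (Finset.mem_product.mp hp').1
      exact hne (e1 ▸ e2 ▸ rfl)
  have hcoTcard : coT.card = ∑ c ∈ Cv, (L c).card := by
    rw [hcoTdef, Finset.card_biUnion]
    · exact Finset.sum_congr rfl fun c _ => by
        rw [Finset.card_product, Finset.card_singleton, mul_one]
    · intro c hc c' hc' hne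
      rw [Function.onFun, Finset.disjoint_left]
      intro p hp hp'
      have e1 : p.2 = c := Finset.mem_singleton.mp (Finset.mem_product.mp hp).2
      have e2 : p.2 = c' := Finset.mem_singleton.mp (Finset.mem_product.mp hp').2
      exact hne (e1 ▸ e2 ▸ rfl)
  have hTmem : ∀ p ∈ T, u + vec p.1 + vec p.2 ∈ S := by
    intro p hp
    obtain ⟨d, hd, hpd⟩ := Finset.mem_biUnion.mp hp
    have e1 : p.1 = d := Finset.mem_singleton.mp (Finset.mem_product.mp hpd).1
    have h2 := (Finset.mem_product.mp hpd).2
    rw [hRdef] at h2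
    have := (Finset.mem_filter.mp h2).2.2
    rw [e1]; exact this
  have hcoTmem : ∀ p ∈ coT, u + vec p.1 + vec p.2 ∉ S := by
    intro p hp
    obtain ⟨c, hc, hpc⟩ := Finset.mem_biUnion.mp hp
    have e2 : p.2 = c := Finset.mem_singleton.mp (Finset.mem_product.mp hpc).2
    have h1 := (Finset.mem_product.mp hpc).1
    rw [hLdef] at h1
    have := (Finset.mem_filter.mp h1).2.2
    rw [e2]; exact this
  have hdisj : Disjoint T coT := by
    rw [Finset.disjoint_left]
    intro p hp hp'
    exact hcoTmem p hp' (hTmem p hp)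
  have hTsub : T ⊆ A ×ˢ Cv := by
    intro p hp
    obtain ⟨d, hd, hpd⟩ := Finset.mem_biUnion.mp hp
    have e1 : p.1 = d := Finset.mem_singleton.mp (Finset.mem_product.mp hpd).1
    have h2 := (Finset.mem_product.mp hpd).2
    refine Finset.mem_product.mpr ⟨e1 ▸ hd, ?_⟩
    rw [hRdef] at h2
    exact (Finset.mem_filter.mp h2).1
  have hcoTsub : coT ⊆ A ×ˢ Cv := by
    intro p hp
    obtain ⟨c, hc, hpc⟩ := Finset.mem_biUnion.mp hp
    have e2 : p.2 = c := Finset.mem_singleton.mp (Finset.mem_product.mp hpc).2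
    have h1 := (Finset.mem_product.mp hpc).1
    rw [hLdef] at h1
    exact Finset.mem_product.mpr ⟨(Finset.mem_filter.mp h1).1, e2 ▸ hc⟩
  have hunion : T.card + coT.card ≤ 5 * s := by
    have h1 : (T ∪ coT).card = T.card + coT.card := Finset.card_union_of_disjoint hdisj
    have h2 : (T ∪ coT).card ≤ (A ×ˢ Cv).card :=
      Finset.card_le_card (Finset.union_subset hTsub hcoTsub)
    rw [Finset.card_product, hA] at h2
    omega
  have hTlow : 5 * s ≤ T.card + 10 := by
    have h1 : ∑ _d ∈ A, s ≤ ∑ d ∈ A, ((R d).card + 2) :=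
      Finset.sum_le_sum fun d hd => by have := hRbound d hd; omega
    rw [Finset.sum_add_distrib, Finset.sum_const, Finset.sum_const, hA] at h1
    rw [hTcard]
    simpa using h1
  have hcoTlow : 3 * s ≤ coT.card := by
    have h1 : ∑ _c ∈ Cv, 3 ≤ ∑ c ∈ Cv, (L c).card := Finset.sum_le_sum hLbound
    rw [Finset.sum_const] at h1
    rw [hcoTcard]
    have : Cv.card • 3 = 3 * s := by rw [smul_eq_mul, ← hsdef]; ring
    omega
  omega

end GridAux

theorem girth_le_six_of_not_antipodal (S : Set (Fin 6 → ℤ))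
    (hreg : IsRegularInduced 6 S 6)
    (u v : Fin 6 → ℤ) (hu : u ∈ S) (hv : v ∈ S) (hadj : (grid 6).Adj u v)
    (hanti : (fun i => 2 * u i - v i) ∉ S) :
    ((grid 6).induce S).egirth ≤ 6 :=
  GridAux.main_lemma hreg u v hu hv hadj hanti
end
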